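/- arXiv:1103.0748 — 5 statements merged into one kernel-verified Lean document; each statement's English description precedes it below -/
import Mathlib

section
/- Let X be an infinite-dimensional Banach space and F a finite-dimensional subspace of X. Then there exists a vector p with ‖p‖ = 1 and dist(p, F) = 1. -/
theorem exists_unit_vector_dist_one_from_finite_dim_subspace
    (X : Type*) [NormedAddCommGroup X] [NormedSpace ℝ X] [CompleteSpace X]
    (hX : ¬ FiniteDimensional ℝ X)
    (F : Submodule ℝ X) (hF : FiniteDimensional ℝ F) :
    ∃ p : X, ‖p‖ = 1 ∧ Metric.infDist p (F : Set X) = 1 := by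
  classical
  -- F is a proper subspace
  obtain ⟨x, hx⟩ : ∃ x : X, x ∉ F := by
    by_contra h
    push_neg at h
    have hFtop : F = ⊤ := eq_top_iff.mpr fun y _ => h y
    subst hFtop
    exact hX ((Submodule.topEquiv (R := ℝ) (M := X)).finiteDimensional)
  have hFc : IsClosed (F : Set X) := Submodule.closed_of_finiteDimensional F
  have hFn : (F : Set X).Nonempty := ⟨0, F.zero_mem⟩
  set d := Metric.infDist x (F : Set X) with hd
  have hdp : 0 < d := by
    rcases lt_or_eq_of_le (Metric.infDist_nonneg (x := x) (s := (F : Set X))) with h | h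
    · exact h
    · exact absurd ((hFc.mem_iff_infDist_zero hFn).2 h.symm) hx
  -- the truncated set in F
  set S : Set F := {y : F | dist x (y : X) ≤ d + 1} with hS
  have hSclosed : IsClosed S := by
    have : Continuous fun y : F => dist x (y : X) :=
      (continuous_const.dist continuous_subtype_val)
    exact isClosed_le this continuous_const
  have hSsub : S ⊆ Metric.closedBall (0 : F) (‖x‖ + d + 1) := by
    intro y hy
    simp only [Metric.mem_closedBall, dist_zero_right]
    have : ‖(y : X)‖ ≤ ‖(y : X) - x‖ + ‖x‖ := by simpa using norm_add_le ((y : X) - x) x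
    have h2 : ‖(y : X) - x‖ ≤ d + 1 := by
      rw [← dist_eq_norm, dist_comm]
      exact hy
    calc ‖y‖ = ‖(y : X)‖ := rfl
      _ ≤ ‖(y : X) - x‖ + ‖x‖ := this
      _ ≤ d + 1 + ‖x‖ := by linarith
      _ = ‖x‖ + d + 1 := by ring
  have hScompact : IsCompact S :=
    (isCompact_closedBall (0 : F) (‖x‖ + d + 1)).of_isClosed_subset hSclosed hSsub
  set K : Set X := Subtype.val '' S with hK
  have hKcompact : IsCompact K := hScompact.image continuous_subtype_val
  have hKsub : K ⊆ (F : Set X) := by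
    rintro _ ⟨y, _, rfl⟩; exact y.2
  have hKne : K.Nonempty := by
    obtain ⟨y, hyF, hyd⟩ := (Metric.infDist_lt_iff hFn).1
      (show d < d + 1 by linarith)
    exact ⟨y, ⟨⟨y, hyF⟩, le_of_lt hyd, rfl⟩⟩
  -- infDist over K equals d
  have hKd : Metric.infDist x K = d := by
    refine le_antisymm ?_ ?_
    · refine le_of_forall_pos_le_add fun ε hε => ?_
      obtain ⟨y, hyF, hyd⟩ := (Metric.infDist_lt_iff hFn).1
        (show d < d + min ε 1 by have := lt_min hε one_pos; linarith)
      have hyK : y ∈ K := ⟨⟨y, hyF⟩, by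
        simp only [hS, Set.mem_setOf_eq]
        calc dist x y ≤ d + min ε 1 := le_of_lt hyd
          _ ≤ d + 1 := by simp [min_le_right], rfl⟩
      calc Metric.infDist x K ≤ dist x y := Metric.infDist_le_dist_of_mem hyK
        _ ≤ d + min ε 1 := le_of_lt hyd
        _ ≤ d + ε := by simp [min_le_left]
    · exact Metric.infDist_le_infDist_of_subset hKsub hKne
  obtain ⟨z, hzK, hzd⟩ := hKcompact.exists_infDist_eq_dist hKne x
  rw [hKd] at hzd
  have hzF : z ∈ F := hKsub hzK
  -- the minimizing property: for all w ∈ F, d ≤ ‖x - z - w'‖ type bounds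
  refine ⟨d⁻¹ • (x - z), ?_, ?_⟩
  · rw [norm_smul, norm_inv, Real.norm_eq_abs, abs_of_pos hdp, ← dist_eq_norm, ← hzd,
      inv_mul_cancel₀ (ne_of_gt hdp)]
  · refine le_antisymm ?_ ?_
    · calc Metric.infDist (d⁻¹ • (x - z)) (F : Set X)
          ≤ dist (d⁻¹ • (x - z)) 0 := Metric.infDist_le_dist_of_mem F.zero_mem
        _ = ‖d⁻¹ • (x - z)‖ := by rw [dist_zero_right]
        _ = 1 := by
            rw [norm_smul, norm_inv, Real.norm_eq_abs, abs_of_pos hdp, ← dist_eq_norm, ← hzd,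
              inv_mul_cancel₀ (ne_of_gt hdp)]
    · by_contra hlt
      push_neg at hlt
      obtain ⟨w, hw, hwd⟩ := (Metric.infDist_lt_iff hFn).1 hlt
      refine absurd hwd (not_lt.2 ?_)
      have hmem : z + d • w ∈ F := F.add_mem hzF (F.smul_mem _ hw)
      have h1 : d ≤ dist x (z + d • w) := Metric.infDist_le_dist_of_mem hmem
      have h2 : dist (d⁻¹ • (x - z)) w = d⁻¹ * dist x (z + d • w) := by
        rw [dist_eq_norm, dist_eq_norm]
        have : d⁻¹ • (x - z) - w = d⁻¹ • (x - (z + d • w)) := by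
          rw [smul_sub, smul_sub, smul_add, smul_smul, inv_mul_cancel₀ (ne_of_gt hdp), one_smul]
          abel
        rw [this, norm_smul, norm_inv, Real.norm_eq_abs, abs_of_pos hdp]
      rw [h2]
      calc (1 : ℝ) = d⁻¹ * d := (inv_mul_cancel₀ (ne_of_gt hdp)).symm
        _ ≤ d⁻¹ * dist x (z + d • w) := by
            apply mul_le_mul_of_nonneg_left h1 (le_of_lt (inv_pos.mpr hdp))
end

section
/- Let s: N_i → X satisfy ‖u − v‖ ≤ ‖s(u) − s(v)‖ ≤ 2‖u − v‖ for all u, v ∈ N_i and s(0) = 0, for two maps s_i, s_{i+1}. Define φ(a) = ((2^i − ‖a‖)/2^{i−1}) s_i(a) + ((‖a‖ − 2^{i−1})/2^{i−1}) s_{i+1}(a) for 2^{i−1} ≤ ‖a‖ ≤ 2^i. Then for a, b with 2^{i−1} ≤ ‖b‖ ≤ ‖a‖ ≤ 2^i: ‖φ(a) − φ(b)‖ ≤ 2‖a − b‖ + 8|‖a‖ − ‖b‖| ≤ 10‖a − b‖. -/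
theorem case_one_upper_estimate
    {E X : Type*} [NormedAddCommGroup E] [NormedSpace ℝ E]
    [NormedAddCommGroup X] [NormedSpace ℝ X]
    (i : ℤ) (si si1 : E → X)
    (hsi : ∀ u v : E, ‖u - v‖ ≤ ‖si u - si v‖ ∧ ‖si u - si v‖ ≤ 2 * ‖u - v‖)
    (hsi1 : ∀ u v : E, ‖u - v‖ ≤ ‖si1 u - si1 v‖ ∧ ‖si1 u - si1 v‖ ≤ 2 * ‖u - v‖)
    (hsi0 : si 0 = 0) (hsi10 : si1 0 = 0)
    (a b : E) (hb1 : (2:ℝ)^(i-1) ≤ ‖b‖) (hba : ‖b‖ ≤ ‖a‖) (ha : ‖a‖ ≤ (2:ℝ)^i) :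
    ‖((((2:ℝ)^i - ‖a‖)/(2:ℝ)^(i-1)) • si a + ((‖a‖ - (2:ℝ)^(i-1))/(2:ℝ)^(i-1)) • si1 a)
      - ((((2:ℝ)^i - ‖b‖)/(2:ℝ)^(i-1)) • si b + ((‖b‖ - (2:ℝ)^(i-1))/(2:ℝ)^(i-1)) • si1 b)‖
      ≤ 2 * ‖a - b‖ + 8 * |‖a‖ - ‖b‖| ∧
    2 * ‖a - b‖ + 8 * |‖a‖ - ‖b‖| ≤ 10 * ‖a - b‖ := by
  set d : ℝ := (2:ℝ)^(i-1) with hd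
  have hdpos : (0:ℝ) < d := by positivity
  have h2i : (2:ℝ)^i = 2 * d := by
    rw [hd, ← zpow_one_add₀ (by norm_num : (2:ℝ) ≠ 0)]
    ring_nf
  have habs : |‖a‖ - ‖b‖| ≤ ‖a - b‖ := abs_norm_sub_norm_le a b
  refine ⟨?_, by have := norm_nonneg (a - b); linarith [abs_nonneg (‖a‖ - ‖b‖)]⟩
  have key : ((((2:ℝ)^i - ‖a‖)/d) • si a + ((‖a‖ - d)/d) • si1 a)
      - ((((2:ℝ)^i - ‖b‖)/d) • si b + ((‖b‖ - d)/d) • si1 b)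
    = (((2:ℝ)^i - ‖a‖)/d) • (si a - si b) + ((‖a‖ - d)/d) • (si1 a - si1 b)
      + (((‖b‖ - ‖a‖)/d) • si b + ((‖a‖ - ‖b‖)/d) • si1 b) := by
    match_scalars <;> field_simp <;> ring
  rw [key]
  have hsb : ‖si b‖ ≤ 4 * d := by
    have := (hsi b 0).2
    rw [hsi0, sub_zero, sub_zero] at this
    linarith [hba.trans ha, h2i ▸ (hba.trans ha)]
  have hsb1 : ‖si1 b‖ ≤ 4 * d := by
    have := (hsi1 b 0).2
    rw [hsi10, sub_zero, sub_zero] at this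
    linarith [h2i ▸ (hba.trans ha)]
  have c1nn : (0:ℝ) ≤ ((2:ℝ)^i - ‖a‖)/d := by
    apply div_nonneg _ hdpos.le; linarith
  have c2nn : (0:ℝ) ≤ (‖a‖ - d)/d := by
    apply div_nonneg _ hdpos.le; linarith [hb1.trans hba]
  have t1 : ‖(((2:ℝ)^i - ‖a‖)/d) • (si a - si b)‖
      ≤ (((2:ℝ)^i - ‖a‖)/d) * (2 * ‖a - b‖) := by
    rw [norm_smul, Real.norm_eq_abs, abs_of_nonneg c1nn]
    exact mul_le_mul_of_nonneg_left (hsi a b).2 c1nn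
  have t2 : ‖((‖a‖ - d)/d) • (si1 a - si1 b)‖
      ≤ ((‖a‖ - d)/d) * (2 * ‖a - b‖) := by
    rw [norm_smul, Real.norm_eq_abs, abs_of_nonneg c2nn]
    exact mul_le_mul_of_nonneg_left (hsi1 a b).2 c2nn
  have t3 : ‖((‖b‖ - ‖a‖)/d) • si b‖ ≤ (|‖a‖ - ‖b‖|/d) * (4 * d) := by
    rw [norm_smul, Real.norm_eq_abs, abs_div, abs_sub_comm, abs_of_pos hdpos]
    exact mul_le_mul_of_nonneg_left hsb (by positivity)
  have t4 : ‖((‖a‖ - ‖b‖)/d) • si1 b‖ ≤ (|‖a‖ - ‖b‖|/d) * (4 * d) := by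
    rw [norm_smul, Real.norm_eq_abs, abs_div, abs_of_pos hdpos]
    exact mul_le_mul_of_nonneg_left hsb1 (by positivity)
  have hsum : (((2:ℝ)^i - ‖a‖)/d) * (2 * ‖a - b‖) + ((‖a‖ - d)/d) * (2 * ‖a - b‖)
      = 2 * ‖a - b‖ := by
    field_simp
    rw [h2i]; ring
  have hrem : (|‖a‖ - ‖b‖|/d) * (4 * d) = 4 * |‖a‖ - ‖b‖| := by
    field_simp
  calc _ ≤ ‖(((2:ℝ)^i - ‖a‖)/d) • (si a - si b) + ((‖a‖ - d)/d) • (si1 a - si1 b)‖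
        + ‖(((‖b‖ - ‖a‖)/d) • si b + ((‖a‖ - ‖b‖)/d) • si1 b)‖ := norm_add_le _ _
    _ ≤ (‖(((2:ℝ)^i - ‖a‖)/d) • (si a - si b)‖ + ‖((‖a‖ - d)/d) • (si1 a - si1 b)‖)
        + (‖((‖b‖ - ‖a‖)/d) • si b‖ + ‖((‖a‖ - ‖b‖)/d) • si1 b‖) :=
      add_le_add (norm_add_le _ _) (norm_add_le _ _)
    _ ≤ 2 * ‖a - b‖ + 8 * |‖a‖ - ‖b‖| := by
      rw [hrem] at t3 t4
      linarith [hsum ▸ add_le_add t1 t2]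
end

section
/- Case 2 lower estimate: let 2^{i−1} ≤ ‖b‖ ≤ 2^i ≤ ‖a‖ ≤ 2^{i+1}, with maps s_j satisfying ‖u−v‖ ≤ ‖s_j(u)−s_j(v)‖ ≤ 2‖u−v‖ and ‖s_j(u)‖ ≤ 2‖u‖, and φ the interpolated map. Then ‖φ(a) − φ(b)‖ ≥ ‖a − b‖ − 12(‖a‖ − ‖b‖). -/
theorem case_two_lower_estimate
    {E X : Type*} [NormedAddCommGroup E] [NormedSpace ℝ E]
    [NormedAddCommGroup X] [NormedSpace ℝ X]
    (s : ℤ → E → X)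
    (hs : ∀ (j : ℤ) (u v : E), ‖u - v‖ ≤ ‖s j u - s j v‖ ∧ ‖s j u - s j v‖ ≤ 2 * ‖u - v‖)
    (hs0 : ∀ (j : ℤ) (u : E), ‖s j u‖ ≤ 2 * ‖u‖)
    (i : ℤ) (a b : E)
    (hb1 : (2:ℝ)^(i-1) ≤ ‖b‖) (hb2 : ‖b‖ ≤ (2:ℝ)^i)
    (ha1 : (2:ℝ)^i ≤ ‖a‖) (ha2 : ‖a‖ ≤ (2:ℝ)^(i+1)) :
    ‖a - b‖ - 12 * (‖a‖ - ‖b‖) ≤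
      ‖((((2:ℝ)^(i+1) - ‖a‖)/(2:ℝ)^i) • s (i+1) a + ((‖a‖ - (2:ℝ)^i)/(2:ℝ)^i) • s (i+2) a)
        - ((((2:ℝ)^i - ‖b‖)/(2:ℝ)^(i-1)) • s i b
            + ((‖b‖ - (2:ℝ)^(i-1))/(2:ℝ)^(i-1)) • s (i+1) b)‖ := by
  have h2 : ((2:ℝ)) ≠ 0 := by norm_num
  have h2i : (0:ℝ) < 2^i := by positivity
  have h2i1 : (0:ℝ) < 2^(i-1) := by positivity
  have hii : (2:ℝ)^(i+1) = 2^i * 2 := by rw [zpow_add_one₀ h2]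
  have hii' : (2:ℝ)^i = 2^(i-1) * 2 := by
    rw [← zpow_add_one₀ h2]; norm_num
  set β : ℝ := (‖a‖ - 2^i)/2^i with hβ
  set γ : ℝ := (2^i - ‖b‖)/2^(i-1) with hγ
  have hα : ((2:ℝ)^(i+1) - ‖a‖)/2^i = 1 - β := by
    rw [hβ, hii]; field_simp; ring
  have hδ : (‖b‖ - (2:ℝ)^(i-1))/2^(i-1) = 1 - γ := by
    rw [hγ, hii']; field_simp; ring
  rw [hα, hδ]
  have hid : ((1 - β) • s (i+1) a + β • s (i+2) a)
        - (γ • s i b + (1 - γ) • s (i+1) b)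
      = (s (i+1) a - s (i+1) b)
        + (β • (s (i+2) a - s (i+1) a) + γ • (s (i+1) b - s i b)) := by
    module
  rw [hid]
  have hT : ‖a - b‖ ≤ ‖s (i+1) a - s (i+1) b‖ := (hs (i+1) a b).1
  have hβ0 : 0 ≤ β := by
    apply div_nonneg (by linarith) h2i.le
  have hγ0 : 0 ≤ γ := by
    apply div_nonneg (by linarith) h2i1.le
  have hA : ‖s (i+2) a - s (i+1) a‖ ≤ 8 * 2^i := by
    calc ‖s (i+2) a - s (i+1) a‖ ≤ ‖s (i+2) a‖ + ‖s (i+1) a‖ := norm_sub_le _ _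
    _ ≤ 2 * ‖a‖ + 2 * ‖a‖ := add_le_add (hs0 _ _) (hs0 _ _)
    _ ≤ 8 * 2^i := by rw [hii] at ha2; linarith
  have hB : ‖s (i+1) b - s i b‖ ≤ 8 * 2^(i-1) := by
    calc ‖s (i+1) b - s i b‖ ≤ ‖s (i+1) b‖ + ‖s i b‖ := norm_sub_le _ _
    _ ≤ 2 * ‖b‖ + 2 * ‖b‖ := add_le_add (hs0 _ _) (hs0 _ _)
    _ ≤ 8 * 2^(i-1) := by rw [hii'] at hb2; linarith
  have hW : ‖β • (s (i+2) a - s (i+1) a) + γ • (s (i+1) b - s i b)‖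
      ≤ 8 * (‖a‖ - ‖b‖) := by
    calc ‖β • (s (i+2) a - s (i+1) a) + γ • (s (i+1) b - s i b)‖
        ≤ ‖β • (s (i+2) a - s (i+1) a)‖ + ‖γ • (s (i+1) b - s i b)‖ := norm_add_le _ _
      _ = β * ‖s (i+2) a - s (i+1) a‖ + γ * ‖s (i+1) b - s i b‖ := by
          rw [norm_smul, norm_smul, Real.norm_eq_abs, Real.norm_eq_abs,
            abs_of_nonneg hβ0, abs_of_nonneg hγ0]
      _ ≤ β * (8 * 2^i) + γ * (8 * 2^(i-1)) := by
          exact add_le_add (mul_le_mul_of_nonneg_left hA hβ0)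
            (mul_le_mul_of_nonneg_left hB hγ0)
      _ = 8 * (‖a‖ - 2^i) + 8 * (2^i - ‖b‖) := by
          rw [hβ, hγ]; field_simp
      _ = 8 * (‖a‖ - ‖b‖) := by ring
  set T := s (i+1) a - s (i+1) b with hTdef
  set W := β • (s (i+2) a - s (i+1) a) + γ • (s (i+1) b - s i b) with hWdef
  have hlow : ‖T‖ ≤ ‖T + W‖ + ‖W‖ := by
    have := norm_add_le (T + W) (-W)
    simpa using this
  linarith
end

section
/- Case 2 upper estimate: under the hypotheses of the previous statement (2^{i−1} ≤ ‖b‖ ≤ 2^i ≤ ‖a‖ ≤ 2^{i+1}), ‖φ(a) − φ(b)‖ ≤ 5‖a−b‖ + 8(‖a‖ − ‖b‖) ≤ 13‖a − b‖. -/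
set_option maxHeartbeats 1000000


theorem case_two_upper_estimate
    {E X : Type*} [NormedAddCommGroup E] [NormedSpace ℝ E]
    [NormedAddCommGroup X] [NormedSpace ℝ X]
    (s : ℤ → E → X)
    (hs : ∀ (j : ℤ) (u v : E), ‖u - v‖ ≤ ‖s j u - s j v‖ ∧ ‖s j u - s j v‖ ≤ 2 * ‖u - v‖)
    (hs0 : ∀ (j : ℤ) (u : E), ‖s j u‖ ≤ 2 * ‖u‖)
    (i : ℤ) (a b : E)
    (hb1 : (2:ℝ)^(i-1) ≤ ‖b‖) (hb2 : ‖b‖ ≤ (2:ℝ)^i)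
    (ha1 : (2:ℝ)^i ≤ ‖a‖) (ha2 : ‖a‖ ≤ (2:ℝ)^(i+1)) :
    ‖((((2:ℝ)^(i+1) - ‖a‖)/(2:ℝ)^i) • s (i+1) a + ((‖a‖ - (2:ℝ)^i)/(2:ℝ)^i) • s (i+2) a)
        - ((((2:ℝ)^i - ‖b‖)/(2:ℝ)^(i-1)) • s i b
            + ((‖b‖ - (2:ℝ)^(i-1))/(2:ℝ)^(i-1)) • s (i+1) b)‖
      ≤ 5 * ‖a - b‖ + 8 * (‖a‖ - ‖b‖) ∧
    5 * ‖a - b‖ + 8 * (‖a‖ - ‖b‖) ≤ 13 * ‖a - b‖ := by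
  have hab : ‖a‖ - ‖b‖ ≤ ‖a - b‖ := norm_sub_norm_le a b
  have hab0 : (0:ℝ) ≤ ‖a - b‖ := norm_nonneg _
  have habd : (0:ℝ) ≤ ‖a‖ - ‖b‖ := by
    have : (2:ℝ)^(i-1) ≤ (2:ℝ)^i := by
      apply zpow_le_zpow_right₀ (by norm_num) (by omega)
    linarith
  refine ⟨?_, by linarith⟩
  have hcpos : (0:ℝ) < (2:ℝ)^i := zpow_pos (by norm_num) i
  have h2c : (2:ℝ)^(i+1) = 2 * (2:ℝ)^i := by
    rw [zpow_add_one₀ (by norm_num : (2:ℝ) ≠ 0)]; ring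
  have hhc : (2:ℝ)^(i-1) = (2:ℝ)^i / 2 := by
    rw [zpow_sub_one₀ (by norm_num : (2:ℝ) ≠ 0)]; ring
  rw [h2c] at ha2 ⊢
  rw [hhc] at hb1 ⊢
  set c : ℝ := (2:ℝ)^i with hc
  set α : ℝ := (2*c - ‖a‖)/c with hα
  set β : ℝ := (‖b‖ - c/2)/(c/2) with hβ
  set γ : ℝ := (‖a‖ - c)/c with hγ
  set δ : ℝ := (c - ‖b‖)/(c/2) with hδ
  set A := s (i+1) a with hA
  set B := s (i+1) b with hB
  set G := s (i+2) a with hG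
  set D := s i b with hD
  have hα0 : 0 ≤ α := div_nonneg (by linarith) hcpos.le
  have hα1 : α ≤ 1 := by
    rw [hα, div_le_one hcpos]; linarith
  have hγ0 : 0 ≤ γ := div_nonneg (by linarith) hcpos.le
  have hδ0 : 0 ≤ δ := div_nonneg (by linarith) (by linarith)
  have hγc : γ * c = ‖a‖ - c := by rw [hγ]; field_simp
  have hδc : δ * (c/2) = c - ‖b‖ := by
    rw [hδ]; field_simp
  have hbn : (0:ℝ) ≤ ‖b‖ := norm_nonneg b
  -- the algebraic decomposition
  have key : (α • A + γ • G) - (δ • D + β • B)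
      = (α • (A - B) + (α - β) • B) + (γ • G - δ • D) := by
    module
  rw [key]
  have t1 : ‖α • (A - B)‖ ≤ 2 * ‖a - b‖ := by
    rw [norm_smul, Real.norm_eq_abs, abs_of_nonneg hα0]
    have h := (hs (i+1) a b).2
    nlinarith [norm_nonneg (A - B)]
  have t2 : ‖(α - β) • B‖ ≤ 4 * (‖a‖ - ‖b‖) := by
    rw [norm_smul, Real.norm_eq_abs]
    have hαβ : α - β = (3*c - ‖a‖ - 2*‖b‖)/c := by
      rw [hα, hβ]; field_simp; ring
    have habs : |α - β| ≤ 2 * (‖a‖ - ‖b‖) / c := by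
      rw [hαβ, abs_div, abs_of_pos hcpos, div_le_div_iff_of_pos_right hcpos]
      exact abs_le.mpr ⟨by linarith, by linarith⟩
    have hBn : ‖B‖ ≤ 2 * c := by
      have := hs0 (i+1) b; linarith
    have h0 : (0:ℝ) ≤ |α - β| := abs_nonneg _
    have h1 : |α - β| * ‖B‖ ≤ (2 * (‖a‖ - ‖b‖) / c) * (2 * c) := by
      apply mul_le_mul habs hBn (norm_nonneg _) (by positivity)
    have h2 : (2 * (‖a‖ - ‖b‖) / c) * (2 * c) = 4 * (‖a‖ - ‖b‖) := by
      field_simp; ring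
    linarith
  have t3 : ‖γ • G‖ ≤ 4 * (‖a‖ - c) := by
    rw [norm_smul, Real.norm_eq_abs, abs_of_nonneg hγ0]
    have hGn : ‖G‖ ≤ 4 * c := by
      have := hs0 (i+2) a; linarith
    nlinarith [norm_nonneg G, hγc]
  have t4 : ‖δ • D‖ ≤ 4 * (c - ‖b‖) := by
    rw [norm_smul, Real.norm_eq_abs, abs_of_nonneg hδ0]
    have hDn : ‖D‖ ≤ 2 * c := by
      have := hs0 i b; linarith
    nlinarith [norm_nonneg D, hδc]
  calc ‖(α • (A - B) + (α - β) • B) + (γ • G - δ • D)‖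
      ≤ ‖α • (A - B) + (α - β) • B‖ + ‖γ • G - δ • D‖ := norm_add_le _ _
    _ ≤ (‖α • (A - B)‖ + ‖(α - β) • B‖) + (‖γ • G‖ + ‖δ • D‖) := by
        gcongr
        · exact norm_add_le _ _
        · exact norm_sub_le _ _
    _ ≤ 5 * ‖a - b‖ + 8 * (‖a‖ - ‖b‖) := by linarith
end

section
/- Gluing lemma for bilipschitz maps with a norm coordinate: let N be a subset of a normed space, φ: N → X with constants L, c, K > 0 such that ‖φ(a)−φ(b)‖ ≤ L‖a−b‖ for all a,b, and for every a,b either ‖φ(a)−φ(b)‖ ≥ c‖a−b‖ − K(|‖a‖−‖b‖|) or |‖a‖−‖b‖| ≥ c′‖a−b‖ for some c′ > 0. Then the map ψ(a) = (φ(a), ‖a‖) into X ⊕_∞ ℝ is a bilipschitz embedding. -/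
theorem gluing_lemma_with_norm_coordinate
    {E X : Type*} [NormedAddCommGroup E] [NormedSpace ℝ E]
    [NormedAddCommGroup X] [NormedSpace ℝ X]
    (N : Set E) (φ : E → X) (L c K c' : ℝ)
    (hL : 0 < L) (hc : 0 < c) (hK : 0 < K) (hc' : 0 < c')
    (hlip : ∀ a ∈ N, ∀ b ∈ N, ‖φ a - φ b‖ ≤ L * ‖a - b‖)
    (halt : ∀ a ∈ N, ∀ b ∈ N,
      c * ‖a - b‖ - K * |‖a‖ - ‖b‖| ≤ ‖φ a - φ b‖ ∨ c' * ‖a - b‖ ≤ |‖a‖ - ‖b‖|) :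
    ∃ r C : ℝ, 0 < r ∧ 1 ≤ C ∧ ∀ a ∈ N, ∀ b ∈ N,
      r * ‖a - b‖ ≤ ‖((φ a, ‖a‖) : X × ℝ) - (φ b, ‖b‖)‖ ∧
      ‖((φ a, ‖a‖) : X × ℝ) - (φ b, ‖b‖)‖ ≤ r * C * ‖a - b‖ := by
  set r : ℝ := min (c / 2) (min c' (c / (2 * K))) with hr_def
  have hr : 0 < r := by
    refine lt_min (by positivity) (lt_min hc' (by positivity))
  refine ⟨r, max (max L 1 / r) 1, hr, le_max_right _ _, ?_⟩
  intro a ha b hb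
  have hnorm : ‖((φ a, ‖a‖) : X × ℝ) - (φ b, ‖b‖)‖
      = max ‖φ a - φ b‖ |‖a‖ - ‖b‖| := by
    rw [Prod.mk_sub_mk, Prod.norm_def]
    rfl
  have habs : |‖a‖ - ‖b‖| ≤ ‖a - b‖ := abs_norm_sub_norm_le a b
  have hlip' := hlip a ha b hb
  constructor
  · rw [hnorm]
    rcases halt a ha b hb with h | h
    · by_cases hcase : |‖a‖ - ‖b‖| ≤ c / (2 * K) * ‖a - b‖
      · refine le_max_of_le_left ?_
        have hr1 : r ≤ c / 2 := min_le_left _ _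
        have hb0 : 0 ≤ ‖a - b‖ := norm_nonneg _
        have h2 := mul_le_mul_of_nonneg_left hcase hK.le
        have h3 : K * (c / (2 * K) * ‖a - b‖) = c / 2 * ‖a - b‖ := by
          field_simp
        nlinarith
      · refine le_max_of_le_right ?_
        have hr1 : r ≤ c / (2 * K) := le_trans (min_le_right _ _) (min_le_right _ _)
        have hb0 : 0 ≤ ‖a - b‖ := norm_nonneg _
        nlinarith
    · refine le_max_of_le_right ?_
      have hr1 : r ≤ c' := le_trans (min_le_right _ _) (min_le_left _ _)
      have hb0 : 0 ≤ ‖a - b‖ := norm_nonneg _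
      nlinarith
  · rw [hnorm]
    have hrc : max L 1 ≤ r * max (max L 1 / r) 1 := by
      have : r * (max L 1 / r) = max L 1 := by field_simp
      calc max L 1 = r * (max L 1 / r) := this.symm
        _ ≤ r * max (max L 1 / r) 1 := by
            exact mul_le_mul_of_nonneg_left (le_max_left _ _) hr.le
    have hb0 : 0 ≤ ‖a - b‖ := norm_nonneg _
    refine max_le ?_ ?_
    · calc ‖φ a - φ b‖ ≤ L * ‖a - b‖ := hlip'
        _ ≤ max L 1 * ‖a - b‖ := by nlinarith [le_max_left L 1]
        _ ≤ r * max (max L 1 / r) 1 * ‖a - b‖ := by nlinarith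
    · calc |‖a‖ - ‖b‖| ≤ ‖a - b‖ := habs
        _ ≤ max L 1 * ‖a - b‖ := by nlinarith [le_max_right L 1]
        _ ≤ r * max (max L 1 / r) 1 * ‖a - b‖ := by nlinarith
end
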